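/- The group G cannot be decomposed as an internal direct product of two subgroups of orders 2 and 80; that is, there are no subgroups N, H ≤ G with |N| = 2, |H| = 80, N and H normal in G, N ∩ H trivial, and NH = G. -/

import Mathlib

open Pointwise


/-- The group `G = ⟨α, β ∣ α⁴⁰ = β⁴ = 1, βαβ⁻¹ = α¹³⟩` of order 160
cannot be decomposed as an internal direct product of two subgroups of orders 2 and 80:
there are no normal subgroups `N, H` of `G` with `|N| = 2`, `|H| = 80`, trivial
intersection, and `NH = G`. -/
theorem no_direct_product_decomposition_two_times_eighty
    (G : Type*) [Group G] (α β : G)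
    (hgen : Subgroup.closure {α, β} = ⊤)
    (hα : α ^ 40 = 1) (hβ : β ^ 4 = 1)
    (hrel : β * α * β⁻¹ = α ^ 13)
    (hcard : Nat.card G = 160) :
    ¬ ∃ N H : Subgroup G, Nat.card N = 2 ∧ Nat.card H = 80 ∧
      N.Normal ∧ H.Normal ∧ N ⊓ H = ⊥ ∧ N ⊔ H = ⊤ := by
  rintro ⟨N, H, hNcard, hHcard, hNnorm, hHnorm, hNH, -⟩
  haveI := hNnorm; haveI := hHnorm
  have hGfin : Finite G := Nat.finite_of_card_ne_zero (by omega)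
  -- conjugation formula
  have hconj : ∀ m : ℕ, β ^ m * α * (β ^ m)⁻¹ = α ^ (13 ^ m : ℕ) := by
    intro m
    induction m with
    | zero => simp
    | succ m ih =>
      have h1 : β ^ (m + 1) * α * (β ^ (m + 1))⁻¹
          = β * (β ^ m * α * (β ^ m)⁻¹) * β⁻¹ := by group
      rw [h1, ih, ← conj_pow, hrel, ← pow_mul, pow_succ, mul_comm (13 ^ m) 13]
  have hβinv : β⁻¹ = β ^ 3 := by
    refine inv_eq_of_mul_eq_one_right ?_
    rw [← pow_succ']; exact hβ
  have hc3 : β⁻¹ * α * (β⁻¹)⁻¹ = α ^ (2197 : ℕ) := by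
    rw [hβinv]; exact hconj 3
  set A := Subgroup.zpowers α with hAdef
  set B := Subgroup.zpowers β with hBdef
  have hαmem : α ∈ A := Subgroup.mem_zpowers α
  -- A is normal
  have hAnorm : A.Normal := by
    rw [← Subgroup.normalizer_eq_top_iff, ← top_le_iff, ← hgen, Subgroup.closure_le]
    rintro g (rfl | rfl)
    · exact Subgroup.le_normalizer hαmem
    · rw [SetLike.mem_coe, Subgroup.mem_normalizer_iff]
      intro x
      constructor
      · intro hx
        obtain ⟨k, rfl⟩ := Subgroup.mem_zpowers_iff.mp hx
        have h2 : g * α ^ k * g⁻¹ = (α ^ (13 : ℕ)) ^ k := by rw [← hrel, conj_zpow]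
        rw [h2]
        exact Subgroup.zpow_mem A (Subgroup.pow_mem A hαmem 13) k
      · intro hx
        obtain ⟨k, hk⟩ := Subgroup.mem_zpowers_iff.mp hx
        have hx' : x = (α ^ (2197 : ℕ)) ^ k := by
          rw [← hc3, conj_zpow, hk]; group
        rw [hx']
        exact Subgroup.zpow_mem A (Subgroup.pow_mem A hαmem 2197) k
  haveI := hAnorm
  -- A ⊔ B = ⊤
  have hsup : A ⊔ B = ⊤ := by
    rw [hAdef, hBdef, Subgroup.zpowers_eq_closure, Subgroup.zpowers_eq_closure,
      ← Subgroup.closure_union, Set.singleton_union]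
    exact hgen
  -- order of α is 40
  have horder : orderOf α = 40 := by
    have hd : orderOf α ∣ 40 := orderOf_dvd_of_pow_eq_one hα
    have hdβ : orderOf β ∣ 4 := orderOf_dvd_of_pow_eq_one hβ
    have hle : (160 : ℕ) ≤ orderOf α * orderOf β := by
      calc (160 : ℕ) = Nat.card G := hcard.symm
        _ = Nat.card (Set.univ : Set G) := (Nat.card_congr (Equiv.Set.univ G)).symm
        _ = Nat.card ((A : Set G) * (B : Set G)) := by
            rw [← Subgroup.coe_top (G := G), ← hsup, Subgroup.normal_mul]
        _ ≤ Nat.card (A : Set G) * Nat.card (B : Set G) := Set.natCard_mul_le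
        _ = orderOf α * orderOf β := by
            simp [hAdef, hBdef, Nat.card_zpowers]
    have h4 : orderOf β ≤ 4 := Nat.le_of_dvd (by norm_num) hdβ
    have h40 : orderOf α ≤ 40 := Nat.le_of_dvd (by norm_num) hd
    have : 160 ≤ orderOf α * 4 := le_trans hle (Nat.mul_le_mul_left _ h4)
    omega
  -- squares land in H
  have hHidx : H.index = 2 := by
    have h := Subgroup.card_mul_index H
    rw [hHcard, hcard] at h; omega
  have hsq : ∀ g : G, g ^ 2 ∈ H := by
    intro g
    have h := Subgroup.pow_index_mem H g
    rwa [hHidx] at h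
  have hα2 : α ^ (2 : ℕ) ∈ H := hsq α
  -- the nontrivial element of N
  obtain ⟨n, hnN, hn1⟩ := N.bot_or_exists_ne_one.resolve_left
    (by intro h; rw [h, Subgroup.card_bot] at hNcard; omega)
  have hnord : orderOf n = 2 := by
    have h1 : orderOf (⟨n, hnN⟩ : N) ∣ 2 := hNcard ▸ orderOf_dvd_natCard _
    rw [Subgroup.orderOf_mk] at h1
    rcases (Nat.prime_two).eq_one_or_self_of_dvd _ h1 with h | h
    · exact absurd (orderOf_eq_one_iff.mp h) hn1
    · exact h
  have hn2 : n ^ (2 : ℕ) = 1 := by rw [← hnord]; exact pow_orderOf_eq_one n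
  have h2' : n ^ (2 : ℤ) = 1 := by
    rw [show (2 : ℤ) = ((2 : ℕ) : ℤ) from rfl, zpow_natCast]; exact hn2
  have hNz : N = Subgroup.zpowers n := by
    refine (Subgroup.eq_of_le_of_card_ge (Subgroup.zpowers_le.mpr hnN) ?_).symm
    rw [hNcard, Nat.card_zpowers, hnord]
  -- n commutes with α
  have hcent : α * n * α⁻¹ = n := by
    have hmem : α * n * α⁻¹ ∈ N := hNnorm.conj_mem n hnN α
    rw [hNz, Subgroup.mem_zpowers_iff] at hmem
    obtain ⟨k, hk⟩ := hmem
    rcases Int.even_or_odd k with ⟨j, rfl⟩ | ⟨j, rfl⟩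
    · exfalso
      have h1 : α * n * α⁻¹ = 1 := by
        rw [← hk, show j + j = 2 * j from (two_mul j).symm, zpow_mul, h2', one_zpow]
      rw [mul_inv_eq_one] at h1
      exact hn1 (mul_left_cancel (h1.trans (mul_one α).symm))
    · rw [zpow_add, zpow_mul, h2', one_zpow, one_mul, zpow_one] at hk
      exact hk.symm
  have hmul : α * n = n * α := by
    have h := congrArg (· * α) hcent
    simpa [mul_assoc] using h
  have hcomm : n * α * n⁻¹ = α := by
    rw [← hmul]; simp [mul_assoc]
  -- write n = a * b with a ∈ A, b ∈ B
  have hnAB : n ∈ (A : Set G) * (B : Set G) := by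
    rw [← Subgroup.normal_mul, hsup]
    trivial
  obtain ⟨a, ha, b, hb, hab⟩ := hnAB
  obtain ⟨i, rfl⟩ := Subgroup.mem_zpowers_iff.mp ha
  obtain ⟨m, rfl⟩ := mem_powers_iff_mem_zpowers.mpr hb
  -- key equation
  have e1 : n * α * n⁻¹ = α ^ ((13 : ℕ) ^ m) := by
    have c1 : n * α * n⁻¹ = α ^ i * (β ^ m * α * (β ^ m)⁻¹) * (α ^ i)⁻¹ := by
      rw [← hab]; group
    rw [c1, hconj m]
    have c2 : Commute (α ^ i) (α ^ ((13 : ℕ) ^ m)) :=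
      ((Commute.refl α).pow_right _).zpow_left i
    rw [c2.eq, mul_inv_cancel_right]
  have hkey : α ^ ((13 : ℕ) ^ m) = α := e1.symm.trans hcomm
  -- 4 ∣ m
  have hfix : ∀ q : ℕ, α ^ ((28561 : ℕ) ^ q) = α := by
    intro q
    induction q with
    | zero => simp
    | succ q ih =>
      rw [pow_succ, pow_mul, ih, show (28561 : ℕ) = 40 * 714 + 1 from by norm_num,
        pow_add, pow_mul, hα, one_pow, one_mul, pow_one]
  have harith : (13 : ℕ) ^ m = 28561 ^ (m / 4) * 13 ^ (m % 4) := by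
    conv_lhs => rw [← Nat.div_add_mod m 4]
    rw [pow_add, pow_mul]
    norm_num
  have hsplit : α ^ ((13 : ℕ) ^ m) = α ^ ((13 : ℕ) ^ (m % 4)) := by
    rw [harith, pow_mul, hfix]
  have heqr : α ^ ((13 : ℕ) ^ (m % 4)) = α := hsplit.symm.trans hkey
  have hdvd : (40 : ℕ) ∣ (13 : ℕ) ^ (m % 4) - 1 := by
    rw [← horder]
    apply orderOf_dvd_of_pow_eq_one
    have hpos : 0 < (13 : ℕ) ^ (m % 4) := pow_pos (by norm_num) _
    have h := heqr
    rw [show (13 : ℕ) ^ (m % 4) = ((13 : ℕ) ^ (m % 4) - 1) + 1 from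
      (Nat.succ_pred_eq_of_pos hpos).symm, pow_succ] at h
    exact mul_right_cancel (h.trans (one_mul α).symm)
  have hm4 : m % 4 = 0 := by
    have hrlt : m % 4 < 4 := Nat.mod_lt _ (by norm_num)
    set r := m % 4 with hr
    interval_cases r
    · rfl
    · exact absurd hdvd (by decide)
    · exact absurd hdvd (by decide)
    · exact absurd hdvd (by decide)
  have hb1 : β ^ m = 1 := by
    conv_lhs => rw [← Nat.div_add_mod m 4, hm4, Nat.add_zero, pow_mul, hβ, one_pow]
  have hab' : α ^ i * β ^ m = n := hab
  have hn_eq : n = α ^ i := by rw [← hab', hb1, mul_one]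
  -- conclude n = α ^ 20 ∈ H
  have hα40 : α ^ (40 : ℤ) = 1 := by
    rw [show (40 : ℤ) = ((40 : ℕ) : ℤ) from rfl, zpow_natCast]; exact hα
  have h40dvd : (40 : ℤ) ∣ i * 2 := by
    have h := orderOf_dvd_iff_zpow_eq_one (x := α) (i := i * 2)
    rw [horder] at h
    refine h.mpr ?_
    rw [zpow_mul, ← hn_eq]
    rw [show (2 : ℤ) = ((2 : ℕ) : ℤ) from rfl, zpow_natCast]
    exact hn2
  have hα20H : α ^ (20 : ℤ) ∈ H := by
    have h := hsq (α ^ 10)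
    rw [← pow_mul] at h
    rw [show (20 : ℤ) = ((20 : ℕ) : ℤ) from rfl, zpow_natCast]
    exact_mod_cast h
  have ht2 : (α ^ (20 : ℤ)) ^ (2 : ℤ) = 1 := by
    rw [← zpow_mul]; norm_num; exact hα
  have hnH : n ∈ H := by
    obtain ⟨k, hk⟩ := h40dvd
    have hi : i = 20 * k := by omega
    have hn_eq' : n = (α ^ (20 : ℤ)) ^ k := by rw [hn_eq, hi, ← zpow_mul]
    rcases Int.even_or_odd k with ⟨j, rfl⟩ | ⟨j, rfl⟩
    · exfalso
      apply hn1
      rw [hn_eq', show j + j = 2 * j from (two_mul j).symm, zpow_mul, ht2, one_zpow]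
    · rw [hn_eq', zpow_add, zpow_mul, ht2, one_zpow, one_mul, zpow_one]
      exact hα20H
  have : n ∈ N ⊓ H := ⟨hnN, hnH⟩
  rw [hNH, Subgroup.mem_bot] at this
  exact hn1 this
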